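/- Let L = {0,…,s−1} and, for each l ∈ L, let Ã_l ∈ ℝ^{n×n}, B̃_l ∈ ℝ^{n×m}, B̃^w_l ∈ ℝ^{n×(l+1)q}, C̃_l ∈ ℝ^{(l+1)p×n}, D̃_l ∈ ℝ^{(l+1)p×m}, D̃^w_l ∈ ℝ^{(l+1)p×(l+1)q} be given, and let G̃ = (V,E) be a switching graph over L. Suppose γ > 0 and there exist symmetric matrices S_i ∈ ℝ^{n×n} and matrices G_i ∈ ℝ^{n×n}, R_i ∈ ℝ^{m×n}, i ∈ V, such that for every edge (i,j,l) ∈ E the block matrix [[G_i + G_iᵀ − S_i, 0, (Ã_l G_i + B̃_l R_i)ᵀ, (C̃_l G_i + D̃_l R_i)ᵀ], [0, γ I_{(l+1)q}, (B̃^w_l)ᵀ, (D̃^w_l)ᵀ], [Ã_l G_i + B̃_l R_i, B̃^w_l, S_j, 0], [C̃_l G_i + D̃_l R_i, D̃^w_l, 0, γ I_{(l+1)p}]] is positive definite. Then each G_i is invertible and, with the switched gains K_i = R_i G_i^{−1}, the switched closed-loop lifted system satisfies: for every pair of sequences (v, σ) with (v_k, v_{k+1}, σ_k) ∈ E for all k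 ∈ ℕ and dynamics x̃_{k+1} = (Ã_{σ_k} + B̃_{σ_k} K_{v_k}) x̃_k + B̃^w_{σ_k} w̃_k, z̃_k = (C̃_{σ_k} + D̃_{σ_k} K_{v_k}) x̃_k + D̃^w_{σ_k} w̃_k, it holds that (i) for every x̃_0 and w̃ ≡ 0, x̃_k → 0 as k → ∞, and (ii) for x̃_0 = 0 and every w̃ with 0 < ∑_{k=0}^∞ ‖w̃_k‖² < ∞, ∑_{k=0}^∞ ‖z̃_k‖² < γ² ∑_{k=0}^∞ ‖w̃_k‖². -/

import Mathlib

open Matrix Filter Topology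
set_option linter.unusedSectionVars false
set_option maxHeartbeats 1000000
set_option linter.unusedSectionVars false
variable {α β : Type*} [Fintype α] [Fintype β] [DecidableEq α] [DecidableEq β]

lemma smul_one_posDef {c : ℝ} (hc : 0 < c) : (c • (1 : Matrix α α ℝ)).PosDef := by
  refine posDef_iff_dotProduct_mulVec.2 ⟨by simp [Matrix.IsHermitian], fun x hx => ?_⟩
  have h1 : (1 : Matrix α α ℝ).PosDef := Matrix.PosDef.one
  have := h1.dotProduct_mulVec_pos hx
  simp only [Matrix.one_mulVec, star_trivial] at this ⊢
  rw [Matrix.smul_mulVec, Matrix.one_mulVec, dotProduct_smul]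
  exact mul_pos hc this

lemma blockDiag_posDef {A : Matrix α α ℝ} {D : Matrix β β ℝ} (hA : A.PosDef) (hD : D.PosDef) :
    (fromBlocks A 0 0 D).PosDef := by
  refine posDef_iff_dotProduct_mulVec.2 ⟨isHermitian_fromBlocks_iff.2 ⟨hA.1, by simp, by simp, hD.1⟩, fun x hx => ?_⟩
  have hx' : x = Sum.elim (x ∘ Sum.inl) (x ∘ Sum.inr) := by funext i; cases i <;> rfl
  rw [hx', fromBlocks_mulVec]
  simp only [Matrix.zero_mulVec, add_zero, zero_add, star_trivial,
    sumElim_dotProduct_sumElim, Sum.elim_comp_inl, Sum.elim_comp_inr]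
  rcases ne_or_eq (x ∘ Sum.inl) 0 with h1 | h1
  · have := hA.dotProduct_mulVec_pos h1
    have h2 := hD.posSemidef.dotProduct_mulVec_nonneg (x ∘ Sum.inr)
    simp only [star_trivial] at this h2
    linarith
  · have h2 : x ∘ Sum.inr ≠ 0 := by
      intro h2; apply hx; funext i; cases i with
      | inl i => exact congrFun h1 i
      | inr i => exact congrFun h2 i
    have := hD.dotProduct_mulVec_pos h2
    have h3 := hA.posSemidef.dotProduct_mulVec_nonneg (x ∘ Sum.inl)
    simp only [star_trivial] at this h3
    linarith

set_option linter.unusedSectionVars false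
variable {α β : Type*} [Fintype α] [Fintype β] [DecidableEq α] [DecidableEq β]

lemma schur_form {A : Matrix α α ℝ} {B : Matrix α β ℝ} {D : Matrix β β ℝ}
    (hM : (fromBlocks A B Bᴴ D).PosDef) (hD : D.PosDef) :
    ∀ x : α → ℝ, x ≠ 0 → 0 < x ⬝ᵥ (A - B * D⁻¹ * Bᴴ) *ᵥ x := by
  haveI : Invertible D := hD.isUnit.invertible
  intro x hx
  have key := schur_complement_eq₂₂ (α := ℝ) A B x (-((D⁻¹ * Bᴴ) *ᵥ x)) hD.1
  simp only [star_trivial, add_neg_cancel, Matrix.zero_vecMul, Matrix.vecMul_zero,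
    zero_dotProduct, dotProduct_zero, zero_add] at key
  have hpos := hM.dotProduct_mulVec_pos (x := Sum.elim x (-((D⁻¹ * Bᴴ) *ᵥ x)))
    (by intro h; exact hx (by funext i; exact congrFun h (Sum.inl i)))
  simp only [star_trivial, Matrix.dotProduct_mulVec] at hpos ⊢
  rw [key] at hpos
  exact hpos

lemma blockDiag_inv {A : Matrix α α ℝ} {D : Matrix β β ℝ} (hA : IsUnit A) (hD : IsUnit D) :
    (fromBlocks A 0 0 D)⁻¹ = fromBlocks A⁻¹ 0 0 D⁻¹ := by
  apply Matrix.inv_eq_right_inv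
  rw [fromBlocks_multiply]
  simp [Matrix.mul_nonsing_inv _ ((Matrix.isUnit_iff_isUnit_det _).1 hA),
    Matrix.mul_nonsing_inv _ ((Matrix.isUnit_iff_isUnit_det _).1 hD),
    Matrix.fromBlocks_one]


lemma quad_continuous {n : ℕ} (M : Matrix (Fin n) (Fin n) ℝ) :
    Continuous fun x : Fin n → ℝ => x ⬝ᵥ M *ᵥ x := by
  simp only [dotProduct, Matrix.mulVec, dotProduct]
  fun_prop

lemma dotProduct_self_nonneg' {ι : Type*} [Fintype ι] (x : ι → ℝ) : 0 ≤ x ⬝ᵥ x :=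
  Finset.sum_nonneg fun i _ => mul_self_nonneg _

lemma dotProduct_self_pos' {ι : Type*} [Fintype ι] {x : ι → ℝ} (hx : x ≠ 0) : 0 < x ⬝ᵥ x := by
  rcases Function.ne_iff.1 hx with ⟨i, hi⟩
  simp only [Pi.zero_apply] at hi
  exact Finset.sum_pos' (fun j _ => mul_self_nonneg _)
    ⟨i, Finset.mem_univ i, mul_self_pos.2 hi⟩

lemma quad_smul {n : ℕ} (M : Matrix (Fin n) (Fin n) ℝ) (c : ℝ) (x : Fin n → ℝ) :
    (c • x) ⬝ᵥ M *ᵥ (c • x) = c ^ 2 * (x ⬝ᵥ M *ᵥ x) := by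
  rw [Matrix.mulVec_smul, smul_dotProduct, dotProduct_smul]
  simp [smul_eq_mul]; ring

/-- compact sphere argument: quadratic forms attain a min on {x | x ⬝ᵥ x = 1} -/
lemma quad_sphere_bounds {n : ℕ} (M : Matrix (Fin n) (Fin n) ℝ) (hn : 0 < n) :
    (∃ x₀, x₀ ⬝ᵥ x₀ = 1 ∧ ∀ y : Fin n → ℝ, y ⬝ᵥ y = 1 → x₀ ⬝ᵥ M *ᵥ x₀ ≤ y ⬝ᵥ M *ᵥ y) := by
  have hcont1 : Continuous fun x : Fin n → ℝ => x ⬝ᵥ x := by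
    simp only [dotProduct]; fun_prop
  set SS : Set (Fin n → ℝ) := {x | x ⬝ᵥ x = 1} with hSS
  have hclosed : IsClosed SS := isClosed_eq hcont1 continuous_const
  have hbdd : Bornology.IsBounded SS := by
    apply (Metric.isBounded_closedBall (x := (0 : Fin n → ℝ)) (r := 1)).subset
    intro x hx
    simp only [Metric.mem_closedBall, dist_zero_right]
    rw [pi_norm_le_iff_of_nonneg zero_le_one]
    intro i
    have h1 : (x i) * (x i) ≤ 1 := by
      calc x i * x i ≤ x ⬝ᵥ x := Finset.single_le_sum (f := fun j => x j * x j)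
            (fun j _ => mul_self_nonneg _) (Finset.mem_univ i)
        _ = 1 := hx
    rw [Real.norm_eq_abs]
    nlinarith [abs_nonneg (x i), sq_abs (x i)]
  have hcompact : IsCompact SS := Metric.isCompact_of_isClosed_isBounded hclosed hbdd
  have hne : SS.Nonempty := by
    refine ⟨Pi.single ⟨0, hn⟩ 1, ?_⟩
    simp [hSS, dotProduct, Pi.single_apply]
  obtain ⟨x₀, hx₀, hmin⟩ := hcompact.exists_isMinOn hne (quad_continuous M).continuousOn
  exact ⟨x₀, hx₀, fun y hy => hmin hy⟩

lemma quad_lower_bound {n : ℕ} (M : Matrix (Fin n) (Fin n) ℝ)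
    (h : ∀ x : Fin n → ℝ, x ≠ 0 → 0 < x ⬝ᵥ M *ᵥ x) :
    ∃ c > 0, ∀ x : Fin n → ℝ, c * (x ⬝ᵥ x) ≤ x ⬝ᵥ M *ᵥ x := by
  rcases Nat.eq_zero_or_pos n with hn | hn
  · refine ⟨1, one_pos, fun x => ?_⟩
    subst hn
    have : x = 0 := funext fun i => i.elim0
    simp [this]
  obtain ⟨x₀, hx₀, hmin⟩ := quad_sphere_bounds M hn
  have hx₀ne : x₀ ≠ 0 := by intro h0; rw [h0] at hx₀; simp at hx₀
  refine ⟨x₀ ⬝ᵥ M *ᵥ x₀, h x₀ hx₀ne, fun x => ?_⟩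
  rcases eq_or_ne x 0 with rfl | hx
  · simp
  · have hxx := dotProduct_self_pos' hx
    set r := Real.sqrt (x ⬝ᵥ x) with hr
    have hrpos : 0 < r := Real.sqrt_pos.2 hxx
    have hr2 : r ^ 2 = x ⬝ᵥ x := Real.sq_sqrt hxx.le
    have hy : (r⁻¹ • x) ⬝ᵥ (r⁻¹ • x) = 1 := by
      rw [smul_dotProduct, dotProduct_smul, smul_eq_mul, smul_eq_mul, ← mul_assoc, ← hr2]
      have : r ≠ 0 := hrpos.ne'
      field_simp
    have hmin2 := hmin _ hy
    rw [quad_smul] at hmin2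
    have hrne : r ^ 2 ≠ 0 := by positivity
    calc x₀ ⬝ᵥ M *ᵥ x₀ * (x ⬝ᵥ x) = (x₀ ⬝ᵥ M *ᵥ x₀) * r ^ 2 := by rw [hr2]
      _ ≤ (r⁻¹ ^ 2 * (x ⬝ᵥ M *ᵥ x)) * r ^ 2 := by nlinarith
      _ = x ⬝ᵥ M *ᵥ x := by field_simp
lemma quad_upper_bound {n : ℕ} (M : Matrix (Fin n) (Fin n) ℝ) :
    ∃ C > 0, ∀ x : Fin n → ℝ, x ⬝ᵥ M *ᵥ x ≤ C * (x ⬝ᵥ x) := by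
  refine ⟨(∑ i, ∑ j, |M i j|) + 1, by positivity, fun x => ?_⟩
  have hbd : ∀ i j : Fin n, x i * (M i j * x j) ≤ |M i j| * (x ⬝ᵥ x) := by
    intro i j
    have h1 : x i * (M i j * x j) ≤ |M i j| * (|x i| * |x j|) := by
      calc x i * (M i j * x j) ≤ |x i * (M i j * x j)| := le_abs_self _
        _ = |M i j| * (|x i| * |x j|) := by rw [abs_mul, abs_mul]; ring
    have h2 : |x i| * |x j| ≤ x ⬝ᵥ x := by
      have hi : x i * x i ≤ x ⬝ᵥ x := Finset.single_le_sum (f := fun k => x k * x k)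
        (fun k _ => mul_self_nonneg _) (Finset.mem_univ i)
      have hj : x j * x j ≤ x ⬝ᵥ x := Finset.single_le_sum (f := fun k => x k * x k)
        (fun k _ => mul_self_nonneg _) (Finset.mem_univ j)
      nlinarith [abs_nonneg (x i), abs_nonneg (x j), sq_abs (x i), sq_abs (x j),
        two_mul_le_add_sq (|x i|) (|x j|)]
    nlinarith [abs_nonneg (M i j)]
  calc x ⬝ᵥ M *ᵥ x = ∑ i, ∑ j, x i * (M i j * x j) := by
        simp [dotProduct, Matrix.mulVec, Finset.mul_sum]
    _ ≤ ∑ i, ∑ j, |M i j| * (x ⬝ᵥ x) := by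
        apply Finset.sum_le_sum; intro i _; apply Finset.sum_le_sum; intro j _; exact hbd i j
    _ = (∑ i, ∑ j, |M i j|) * (x ⬝ᵥ x) := by
        rw [Finset.sum_mul]; congr 1; ext i; rw [Finset.sum_mul]
    _ ≤ ((∑ i, ∑ j, |M i j|) + 1) * (x ⬝ᵥ x) := by
        have := dotProduct_self_nonneg' x; nlinarith


/-- completion of squares: `uᵀ(G + Gᵀ - S)u ≤ (Gu)ᵀ S⁻¹ (Gu)` for `S ≻ 0` symmetric. -/
lemma gsg_bound {ι : Type*} [Fintype ι] [DecidableEq ι] {S G : Matrix ι ι ℝ} (hS : S.PosDef) (hsym : S.IsSymm)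
    (u : ι → ℝ) :
    u ⬝ᵥ (G + Gᵀ - S) *ᵥ u ≤ (G *ᵥ u) ⬝ᵥ S⁻¹ *ᵥ (G *ᵥ u) := by
  have hdet := hS.isUnit
  have hSinv : S⁻¹ᵀ = S⁻¹ := by
    rw [Matrix.transpose_nonsing_inv, hsym.eq]
  have hinv : S⁻¹ *ᵥ (S *ᵥ u) = u := by
    rw [Matrix.mulVec_mulVec, Matrix.nonsing_inv_mul _ ((Matrix.isUnit_iff_isUnit_det _).1 hdet),
      Matrix.one_mulVec]
  have hvm : ∀ y : ι → ℝ, (S *ᵥ u) ⬝ᵥ (S⁻¹ *ᵥ y) = u ⬝ᵥ y := by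
    intro y
    rw [Matrix.dotProduct_mulVec, ← hSinv, Matrix.vecMul_transpose, hinv]
  have h0 : 0 ≤ (G *ᵥ u - S *ᵥ u) ⬝ᵥ S⁻¹ *ᵥ (G *ᵥ u - S *ᵥ u) := by
    have := hS.inv.posSemidef.dotProduct_mulVec_nonneg (G *ᵥ u - S *ᵥ u)
    simpa using this
  have hexp : (G *ᵥ u - S *ᵥ u) ⬝ᵥ S⁻¹ *ᵥ (G *ᵥ u - S *ᵥ u)
      = (G *ᵥ u) ⬝ᵥ S⁻¹ *ᵥ (G *ᵥ u) - (G *ᵥ u) ⬝ᵥ u - u ⬝ᵥ (G *ᵥ u) + u ⬝ᵥ (S *ᵥ u) := by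
    rw [Matrix.mulVec_sub, dotProduct_sub, sub_dotProduct, sub_dotProduct, hvm, hvm,
      hinv]
    ring
  have hlhs : u ⬝ᵥ (G + Gᵀ - S) *ᵥ u = u ⬝ᵥ (G *ᵥ u) + (G *ᵥ u) ⬝ᵥ u - u ⬝ᵥ (S *ᵥ u) := by
    rw [Matrix.sub_mulVec, Matrix.add_mulVec, dotProduct_sub, dotProduct_add]
    have : u ⬝ᵥ Gᵀ *ᵥ u = (G *ᵥ u) ⬝ᵥ u := by
      rw [Matrix.dotProduct_mulVec, Matrix.vecMul_transpose, dotProduct_comm]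
    rw [this]
  linarith [hexp ▸ h0]


lemma elim_ne_zero_left' {α β : Type*} {u : α → ℝ} {w : β → ℝ} (hu : u ≠ 0) : Sum.elim u w ≠ 0 :=
  fun h => hu (by funext i; exact congrFun h (Sum.inl i))

lemma schur_form' {α β : Type*} [Fintype α] [Fintype β] [DecidableEq α] [DecidableEq β]
    {A : Matrix α α ℝ} {B : Matrix α β ℝ} {D : Matrix β β ℝ}
    (hM : (fromBlocks A B Bᴴ D).PosDef) (hD : D.PosDef) :
    ∀ x : α → ℝ, x ≠ 0 → 0 < x ⬝ᵥ (A - B * D⁻¹ * Bᴴ) *ᵥ x := by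
  haveI : Invertible D := hD.isUnit.invertible
  intro x hx
  have key := schur_complement_eq₂₂ (α := ℝ) A B x (-((D⁻¹ * Bᴴ) *ᵥ x)) hD.1
  simp only [star_trivial, add_neg_cancel, Matrix.zero_vecMul, Matrix.vecMul_zero,
    zero_dotProduct, dotProduct_zero, zero_add] at key
  have hpos := hM.dotProduct_mulVec_pos (x := Sum.elim x (-((D⁻¹ * Bᴴ) *ᵥ x))) (elim_ne_zero_left' hx)
  simp only [star_trivial, Matrix.dotProduct_mulVec] at hpos ⊢
  rw [key] at hpos
  exact hpos

lemma key_ineq {ι κ τ : Type*} [Fintype ι] [Fintype κ] [Fintype τ]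
    [DecidableEq ι] [DecidableEq κ] [DecidableEq τ]
    {γ : ℝ} (hγ : 0 < γ) {Si Sj Gi A1 : Matrix ι ι ℝ} {C1 : Matrix τ ι ℝ}
    {Bw : Matrix ι κ ℝ} {Dw : Matrix τ κ ℝ}
    (hSi : Si.PosDef) (hSj : Sj.PosDef) (hSisym : Si.IsSymm)
    (hM : (fromBlocks (fromBlocks (Gi + Giᵀ - Si) 0 0 (γ • 1)) (fromBlocks A1ᵀ C1ᵀ Bwᵀ Dwᵀ)
        (fromBlocks A1 Bw C1 Dw) (fromBlocks Sj 0 0 (γ • 1))).PosDef) :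
    ∀ (u : ι → ℝ) (w : κ → ℝ), Sum.elim u w ≠ 0 →
      (A1 *ᵥ u + Bw *ᵥ w) ⬝ᵥ Sj⁻¹ *ᵥ (A1 *ᵥ u + Bw *ᵥ w)
        + γ⁻¹ * ((C1 *ᵥ u + Dw *ᵥ w) ⬝ᵥ (C1 *ᵥ u + Dw *ᵥ w))
      < (Gi *ᵥ u) ⬝ᵥ Si⁻¹ *ᵥ (Gi *ᵥ u) + γ * (w ⬝ᵥ w) := by
  intro u w hne
  -- rewrite bottom-left block as Bᴴ
  have hCB : (fromBlocks A1 Bw C1 Dw)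
      = (fromBlocks A1ᵀ C1ᵀ Bwᵀ Dwᵀ)ᴴ := by
    rw [conjTranspose_eq_transpose_of_trivial, fromBlocks_transpose]
    simp
  rw [hCB] at hM
  -- positivity of the Schur-complement quadratic form
  have hγ1 : (γ • (1 : Matrix τ τ ℝ)).PosDef := by
    refine posDef_iff_dotProduct_mulVec.2 ⟨by simp [Matrix.IsHermitian], fun x hx => ?_⟩
    rw [Matrix.smul_mulVec, Matrix.one_mulVec, dotProduct_smul]
    exact mul_pos hγ (by simpa using Matrix.PosDef.one.dotProduct_mulVec_pos hx)
  have hD : (fromBlocks Sj 0 0 (γ • (1 : Matrix τ τ ℝ))).PosDef := blockDiag_posDef hSj hγ1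
  have hform := schur_form' hM hD (Sum.elim u w) hne
  -- compute the inverse of the block-diagonal matrix
  have hγinv : (γ • (1 : Matrix τ τ ℝ))⁻¹ = γ⁻¹ • (1 : Matrix τ τ ℝ) := by
    apply Matrix.inv_eq_right_inv
    rw [Matrix.smul_mul, Matrix.mul_smul, smul_smul, mul_inv_cancel₀ hγ.ne', one_smul, one_mul]
  have hDinv : (fromBlocks Sj 0 0 (γ • (1 : Matrix τ τ ℝ)))⁻¹
      = fromBlocks Sj⁻¹ 0 0 (γ⁻¹ • (1 : Matrix τ τ ℝ)) := by
    rw [blockDiag_inv hSj.isUnit hγ1.isUnit, hγinv]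
  rw [hDinv] at hform
  -- expand the quadratic form
  set ξ := Sum.elim u w with hξ
  set a := A1 *ᵥ u + Bw *ᵥ w with ha
  set b := C1 *ᵥ u + Dw *ᵥ w with hb
  have hBH : (fromBlocks A1ᵀ C1ᵀ Bwᵀ Dwᵀ)ᴴ = fromBlocks A1 Bw C1 Dw := hCB.symm
  have hBt : (fromBlocks A1ᵀ C1ᵀ Bwᵀ Dwᵀ) = (fromBlocks A1 Bw C1 Dw)ᵀ := by
    rw [fromBlocks_transpose]
  have hη : (fromBlocks A1 Bw C1 Dw) *ᵥ ξ = Sum.elim a b := by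
    rw [hξ, fromBlocks_mulVec, Sum.elim_comp_inl, Sum.elim_comp_inr]
  have hterm2 : ξ ⬝ᵥ ((fromBlocks A1ᵀ C1ᵀ Bwᵀ Dwᵀ)
        * (fromBlocks Sj⁻¹ 0 0 (γ⁻¹ • (1 : Matrix τ τ ℝ)))
        * (fromBlocks A1ᵀ C1ᵀ Bwᵀ Dwᵀ)ᴴ) *ᵥ ξ
      = a ⬝ᵥ Sj⁻¹ *ᵥ a + γ⁻¹ * (b ⬝ᵥ b) := by
    rw [← Matrix.mulVec_mulVec, ← Matrix.mulVec_mulVec, hBH, hη, Matrix.dotProduct_mulVec,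
      hBt, Matrix.vecMul_transpose, hη, fromBlocks_mulVec]
    simp only [Sum.elim_comp_inl, Sum.elim_comp_inr, Matrix.zero_mulVec, add_zero, zero_add,
      Matrix.smul_mulVec, Matrix.one_mulVec, sumElim_dotProduct_sumElim,
      dotProduct_smul, smul_eq_mul]
  have hterm1 : ξ ⬝ᵥ (fromBlocks (Gi + Giᵀ - Si) 0 0 (γ • (1 : Matrix κ κ ℝ))) *ᵥ ξ
      = u ⬝ᵥ (Gi + Giᵀ - Si) *ᵥ u + γ * (w ⬝ᵥ w) := by
    rw [hξ, fromBlocks_mulVec]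
    simp only [Sum.elim_comp_inl, Sum.elim_comp_inr, Matrix.zero_mulVec, add_zero, zero_add,
      Matrix.smul_mulVec, Matrix.one_mulVec, sumElim_dotProduct_sumElim,
      dotProduct_smul, smul_eq_mul]
  rw [Matrix.sub_mulVec, dotProduct_sub, hterm1, hterm2] at hform
  have hgsg := gsg_bound hSi hSisym (G := Gi) u
  linarith

lemma cl_eq {τ ι κ : Type*} [Fintype ι] [Fintype κ] [DecidableEq ι]
    (X : Matrix τ ι ℝ) (Y : Matrix τ κ ℝ) (R : Matrix κ ι ℝ) {G : Matrix ι ι ℝ}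
    (hG : IsUnit G) : (X + Y * (R * G⁻¹)) * G = X * G + Y * R := by
  rw [Matrix.add_mul, Matrix.mul_assoc, Matrix.mul_assoc,
    Matrix.nonsing_inv_mul _ ((Matrix.isUnit_iff_isUnit_det _).1 hG), Matrix.mul_one]

lemma cl_vec {τ ι κ : Type*} [Fintype ι] [Fintype κ] [DecidableEq ι]
    (X : Matrix τ ι ℝ) (Y : Matrix τ κ ℝ) (R : Matrix κ ι ℝ) {G : Matrix ι ι ℝ}
    (hG : IsUnit G) (x : ι → ℝ) :
    (X * G + Y * R) *ᵥ (G⁻¹ *ᵥ x) = (X + Y * (R * G⁻¹)) *ᵥ x := by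
  rw [Matrix.mulVec_mulVec, ← cl_eq X Y R hG, Matrix.mul_assoc,
    Matrix.mul_nonsing_inv _ ((Matrix.isUnit_iff_isUnit_det _).1 hG), Matrix.mul_one]

lemma G_mulVec_inv {ι : Type*} [Fintype ι] [DecidableEq ι] {G : Matrix ι ι ℝ}
    (hG : IsUnit G) (x : ι → ℝ) : G *ᵥ (G⁻¹ *ᵥ x) = x := by
  rw [Matrix.mulVec_mulVec, Matrix.mul_nonsing_inv _ ((Matrix.isUnit_iff_isUnit_det _).1 hG),
    Matrix.one_mulVec]

section Blocks
variable {α β : Type*} [Fintype α] [Fintype β] [DecidableEq α] [DecidableEq β]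

lemma elim_ne_zero_right' {u : α → ℝ} {w : β → ℝ} (hw : w ≠ 0) : Sum.elim u w ≠ 0 :=
  fun h => hw (by funext i; exact congrFun h (Sum.inr i))

lemma elim_eq_zero' {u : α → ℝ} {w : β → ℝ} (h : Sum.elim u w = 0) : u = 0 ∧ w = 0 :=
  ⟨by funext i; exact congrFun h (Sum.inl i), by funext i; exact congrFun h (Sum.inr i)⟩

lemma posDef_fst {A : Matrix α α ℝ} {B : Matrix α β ℝ} {C : Matrix β α ℝ} {D : Matrix β β ℝ}
    (h : (fromBlocks A B C D).PosDef) : A.PosDef := by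
  have hh := isHermitian_fromBlocks_iff.1 h.1
  refine posDef_iff_dotProduct_mulVec.2 ⟨hh.1, fun x hx => ?_⟩
  have := h.dotProduct_mulVec_pos (x := Sum.elim x 0) (elim_ne_zero_left' hx)
  simpa [fromBlocks_mulVec, sumElim_dotProduct_sumElim, Sum.elim_comp_inl,
    Sum.elim_comp_inr] using this

lemma posDef_snd {A : Matrix α α ℝ} {B : Matrix α β ℝ} {C : Matrix β α ℝ} {D : Matrix β β ℝ}
    (h : (fromBlocks A B C D).PosDef) : D.PosDef := by
  have hh := isHermitian_fromBlocks_iff.1 h.1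
  refine posDef_iff_dotProduct_mulVec.2 ⟨hh.2.2.2, fun x hx => ?_⟩
  have := h.dotProduct_mulVec_pos (x := Sum.elim 0 x) (elim_ne_zero_right' hx)
  simpa [fromBlocks_mulVec, sumElim_dotProduct_sumElim, Sum.elim_comp_inl,
    Sum.elim_comp_inr] using this

end Blocks

/-- synthesis of switched state-feedback gains K_i = R_i G_i⁻¹ with
guaranteed ℓ2-performance for the lifted constrained switched system; the gain
applied at step k is the one of the current node v_k of the graph walk. -/
theorem stmt4
    (s n m q p nV : ℕ) (hs : 1 ≤ s)
    (At : Fin s → Matrix (Fin n) (Fin n) ℝ)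
    (Bt : Fin s → Matrix (Fin n) (Fin m) ℝ)
    (Bw : (l : Fin s) → Matrix (Fin n) (Fin ((l : ℕ) + 1) × Fin q) ℝ)
    (Ct : (l : Fin s) → Matrix (Fin ((l : ℕ) + 1) × Fin p) (Fin n) ℝ)
    (Dt : (l : Fin s) → Matrix (Fin ((l : ℕ) + 1) × Fin p) (Fin m) ℝ)
    (Dw : (l : Fin s) → Matrix (Fin ((l : ℕ) + 1) × Fin p) (Fin ((l : ℕ) + 1) × Fin q) ℝ)
    (E : Set (Fin nV × Fin nV × Fin s))
    (hout : ∀ i : Fin nV, ∃ j l, (i, j, l) ∈ E)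
    (hin : ∀ j : Fin nV, ∃ i l, (i, j, l) ∈ E)
    (γ : ℝ) (hγ : 0 < γ)
    (S G : Fin nV → Matrix (Fin n) (Fin n) ℝ)
    (R : Fin nV → Matrix (Fin m) (Fin n) ℝ)
    (hSsymm : ∀ i, (S i).IsSymm)
    (hLMI : ∀ i j l, (i, j, l) ∈ E →
      (Matrix.fromBlocks
        (Matrix.fromBlocks (G i + (G i)ᵀ - S i) 0 0
          (γ • (1 : Matrix (Fin ((l : ℕ) + 1) × Fin q) (Fin ((l : ℕ) + 1) × Fin q) ℝ)))
        (Matrix.fromBlocks (At l * G i + Bt l * R i)ᵀ (Ct l * G i + Dt l * R i)ᵀ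
          (Bw l)ᵀ (Dw l)ᵀ)
        (Matrix.fromBlocks (At l * G i + Bt l * R i) (Bw l)
          (Ct l * G i + Dt l * R i) (Dw l))
        (Matrix.fromBlocks (S j) 0 0
          (γ • (1 : Matrix (Fin ((l : ℕ) + 1) × Fin p) (Fin ((l : ℕ) + 1) × Fin p) ℝ)))).PosDef) :
    (∀ i, IsUnit (G i)) ∧
    ∀ (v : ℕ → Fin nV) (σ : ℕ → Fin s),
      (∀ k, (v k, v (k + 1), σ k) ∈ E) →
      -- (i) internal (asymptotic) stability of the switched closed loop
      ((∀ x : ℕ → Fin n → ℝ,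
          (∀ k, x (k + 1) =
            (At (σ k) + Bt (σ k) * (R (v k) * (G (v k))⁻¹)).mulVec (x k)) →
          Tendsto x atTop (nhds 0)) ∧
      -- (ii) closed-loop ℓ2-gain bound for zero initial state
       (∀ (x : ℕ → Fin n → ℝ)
          (w : (k : ℕ) → Fin ((σ k : ℕ) + 1) × Fin q → ℝ)
          (z : (k : ℕ) → Fin ((σ k : ℕ) + 1) × Fin p → ℝ),
          x 0 = 0 →
          (∀ k, x (k + 1) =
            (At (σ k) + Bt (σ k) * (R (v k) * (G (v k))⁻¹)).mulVec (x k) +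
            (Bw (σ k)).mulVec (w k)) →
          (∀ k, z k =
            (Ct (σ k) + Dt (σ k) * (R (v k) * (G (v k))⁻¹)).mulVec (x k) +
            (Dw (σ k)).mulVec (w k)) →
          0 < ∑' k, ENNReal.ofReal (∑ i, (w k i) ^ 2) →
          (∑' k, ENNReal.ofReal (∑ i, (w k i) ^ 2)) < ⊤ →
          (∑' k, ENNReal.ofReal (∑ i, (z k i) ^ 2)) <
            ENNReal.ofReal γ ^ 2 * ∑' k, ENNReal.ofReal (∑ i, (w k i) ^ 2))) := by
  classical
  have hSpd : ∀ i, (S i).PosDef := by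
    intro i
    obtain ⟨i0, l0, h0⟩ := hin i
    exact posDef_fst (posDef_snd (hLMI i0 i l0 h0))
  have hGGS : ∀ i, (G i + (G i)ᵀ - S i).PosDef := by
    intro i
    obtain ⟨j, l, h0⟩ := hout i
    exact posDef_fst (posDef_fst (hLMI i j l h0))
  have hGunit : ∀ i, IsUnit (G i) := by
    intro i
    rw [Matrix.isUnit_iff_isUnit_det, isUnit_iff_ne_zero]
    intro hdet
    obtain ⟨vv, hvne, hv0⟩ := (Matrix.exists_mulVec_eq_zero_iff).2 hdet
    have h1 := (hGGS i).dotProduct_mulVec_pos hvne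
    have h2 := (hSpd i).dotProduct_mulVec_pos hvne
    simp only [star_trivial] at h1 h2
    have e1 : vv ⬝ᵥ (G i) *ᵥ vv = 0 := by rw [hv0, dotProduct_zero]
    have e2 : vv ⬝ᵥ (G i)ᵀ *ᵥ vv = 0 := by
      rw [Matrix.dotProduct_mulVec, Matrix.vecMul_transpose, hv0, zero_dotProduct]
    rw [Matrix.sub_mulVec, Matrix.add_mulVec, dotProduct_sub, dotProduct_add, e1, e2] at h1
    linarith
  -- notations
  set P : Fin nV → Matrix (Fin n) (Fin n) ℝ := fun i => (S i)⁻¹ with hP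
  have hPpd : ∀ i, (P i).PosDef := fun i => (hSpd i).inv
  have hQnn : ∀ i (y : Fin n → ℝ), 0 ≤ y ⬝ᵥ (P i) *ᵥ y := by
    intro i y
    have := (hPpd i).posSemidef.dotProduct_mulVec_nonneg y
    simpa using this
  refine ⟨hGunit, ?_⟩
  intro v σ hpath
  -- key quadratic inequality along edges
  have hkey : ∀ k (u : Fin n → ℝ) (ww : Fin ((σ k : ℕ) + 1) × Fin q → ℝ),
      Sum.elim u ww ≠ 0 →
      ((At (σ k) * G (v k) + Bt (σ k) * R (v k)) *ᵥ u + Bw (σ k) *ᵥ ww) ⬝ᵥ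
          (P (v (k+1))) *ᵥ ((At (σ k) * G (v k) + Bt (σ k) * R (v k)) *ᵥ u + Bw (σ k) *ᵥ ww)
        + γ⁻¹ * (((Ct (σ k) * G (v k) + Dt (σ k) * R (v k)) *ᵥ u + Dw (σ k) *ᵥ ww) ⬝ᵥ
            ((Ct (σ k) * G (v k) + Dt (σ k) * R (v k)) *ᵥ u + Dw (σ k) *ᵥ ww))
      < (G (v k) *ᵥ u) ⬝ᵥ (P (v k)) *ᵥ (G (v k) *ᵥ u) + γ * (ww ⬝ᵥ ww) := by
    intro k u ww hne
    exact key_ineq hγ (hSpd (v k)) (hSpd (v (k+1))) (hSsymm (v k))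
      (hLMI (v k) (v (k+1)) (σ k) (hpath k)) u ww hne
  constructor
  · -- part (i): asymptotic stability
    intro x hx
    have hcontr : ∀ t : Fin nV × Fin nV × Fin s, ∃ ρ : ℝ, 0 ≤ ρ ∧ ρ < 1 ∧
        ((t.1, t.2.1, t.2.2) ∈ E → ∀ y : Fin n → ℝ,
          ((At t.2.2 + Bt t.2.2 * (R t.1 * (G t.1)⁻¹)) *ᵥ y) ⬝ᵥ (P t.2.1) *ᵥ
            ((At t.2.2 + Bt t.2.2 * (R t.1 * (G t.1)⁻¹)) *ᵥ y)
          ≤ ρ * (y ⬝ᵥ (P t.1) *ᵥ y)) := by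
      rintro ⟨i, j, l⟩
      by_cases hE : (i, j, l) ∈ E
      · set T := At l + Bt l * (R i * (G i)⁻¹) with hT
        set Me := P i - Tᵀ * P j * T with hMe
        have hquad : ∀ y : Fin n → ℝ,
            y ⬝ᵥ Me *ᵥ y = y ⬝ᵥ (P i) *ᵥ y - (T *ᵥ y) ⬝ᵥ (P j) *ᵥ (T *ᵥ y) := by
          intro y
          rw [hMe, Matrix.sub_mulVec, dotProduct_sub]
          congr 1
          rw [← Matrix.mulVec_mulVec, ← Matrix.mulVec_mulVec, Matrix.dotProduct_mulVec,
            Matrix.vecMul_transpose]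
        have hpos : ∀ y : Fin n → ℝ, y ≠ 0 → 0 < y ⬝ᵥ Me *ᵥ y := by
          intro y hy
          rw [hquad]
          have hu : G i *ᵥ ((G i)⁻¹ *ᵥ y) = y := G_mulVec_inv (hGunit i) y
          have hune : (G i)⁻¹ *ᵥ y ≠ 0 := fun h0 => hy (by rw [← hu, h0, Matrix.mulVec_zero])
          have hk := key_ineq hγ (hSpd i) (hSpd j) (hSsymm i) (hLMI i j l hE)
            ((G i)⁻¹ *ᵥ y) 0 (elim_ne_zero_left' hune)
          simp only [Matrix.mulVec_zero, add_zero, dotProduct_zero, mul_zero,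
            zero_dotProduct] at hk
          rw [cl_vec (At l) (Bt l) (R i) (hGunit i) y, hu] at hk
          have hb := dotProduct_self_nonneg'
            ((Ct l * G i + Dt l * R i) *ᵥ ((G i)⁻¹ *ᵥ y))
          have hγinv : (0:ℝ) < γ⁻¹ := inv_pos.2 hγ
          have := mul_nonneg hγinv.le hb
          rw [hT]
          linarith
        obtain ⟨c, hc, hlowb⟩ := quad_lower_bound Me hpos
        obtain ⟨C, hC, hupp⟩ := quad_upper_bound (P i)
        refine ⟨1 - min (c / C) 1, ?_, ?_, fun _ y => ?_⟩
        · have := min_le_right (c / C) 1; linarith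
        · have h1 : 0 < min (c / C) 1 := lt_min (div_pos hc hC) one_pos; linarith
        · have h2 := hlowb y
          rw [hquad] at h2
          have h3 := hupp y
          have h4 : min (c / C) 1 * (y ⬝ᵥ P i *ᵥ y) ≤ c * (y ⬝ᵥ y) := by
            calc min (c / C) 1 * (y ⬝ᵥ P i *ᵥ y) ≤ (c / C) * (y ⬝ᵥ P i *ᵥ y) :=
                  mul_le_mul_of_nonneg_right (min_le_left _ _) (hQnn i y)
              _ ≤ (c / C) * (C * (y ⬝ᵥ y)) :=
                  mul_le_mul_of_nonneg_left h3 (div_nonneg hc.le hC.le)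
              _ = c * (y ⬝ᵥ y) := by field_simp
          simp only [hT] at h2 ⊢
          linarith
      · exact ⟨0, le_refl _, zero_lt_one, fun h => absurd h hE⟩
    choose ρf hρ0 hρ1 hρb using hcontr
    have hne : (Finset.univ : Finset (Fin nV × Fin nV × Fin s)).Nonempty :=
      ⟨(v 0, v 0, σ 0), Finset.mem_univ _⟩
    set ρ : ℝ := Finset.univ.sup' hne ρf with hρdef
    have hρmem : ∀ t, ρf t ≤ ρ := fun t => Finset.le_sup' ρf (Finset.mem_univ t)
    have hρlt1 : ρ < 1 := (Finset.sup'_lt_iff hne).2 fun t _ => hρ1 t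
    have hρnn : 0 ≤ ρ := le_trans (hρ0 (v 0, v 0, σ 0)) (hρmem _)
    have hstep : ∀ k, x (k+1) ⬝ᵥ (P (v (k+1))) *ᵥ x (k+1)
        ≤ ρ * (x k ⬝ᵥ (P (v k)) *ᵥ x k) := by
      intro k
      have hb := hρb (v k, v (k+1), σ k) (hpath k) (x k)
      rw [← hx k] at hb
      exact hb.trans (mul_le_mul_of_nonneg_right (hρmem _) (hQnn _ _))
    have hiter : ∀ k, x k ⬝ᵥ (P (v k)) *ᵥ x k
        ≤ ρ^k * (x 0 ⬝ᵥ (P (v 0)) *ᵥ x 0) := by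
      intro k
      induction k with
      | zero => simp
      | succ k ih =>
        calc x (k+1) ⬝ᵥ (P (v (k+1))) *ᵥ x (k+1) ≤ ρ * (x k ⬝ᵥ (P (v k)) *ᵥ x k) := hstep k
          _ ≤ ρ * (ρ^k * (x 0 ⬝ᵥ (P (v 0)) *ᵥ x 0)) := mul_le_mul_of_nonneg_left ih hρnn
          _ = ρ^(k+1) * (x 0 ⬝ᵥ (P (v 0)) *ᵥ x 0) := by ring
    have htend0 : Tendsto (fun k => ρ^k * (x 0 ⬝ᵥ (P (v 0)) *ᵥ x 0)) atTop (nhds 0) := by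
      have h := tendsto_pow_atTop_nhds_zero_of_lt_one hρnn hρlt1
      simpa using h.mul_const (x 0 ⬝ᵥ (P (v 0)) *ᵥ x 0)
    have hQten : Tendsto (fun k => x k ⬝ᵥ P (v k) *ᵥ x k) atTop (nhds 0) :=
      squeeze_zero (fun k => hQnn _ _) hiter htend0
    have hlow2 : ∀ i : Fin nV, ∃ c > 0, ∀ y : Fin n → ℝ, c * (y ⬝ᵥ y) ≤ y ⬝ᵥ (P i) *ᵥ y := by
      intro i
      apply quad_lower_bound
      intro y hy
      have := (hPpd i).dotProduct_mulVec_pos hy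
      simpa using this
    choose cf hcf hcb using hlow2
    have hneV : (Finset.univ : Finset (Fin nV)).Nonempty := ⟨v 0, Finset.mem_univ _⟩
    set c := Finset.univ.inf' hneV cf with hcdef
    have hcpos : 0 < c := (Finset.lt_inf'_iff hneV).2 fun i _ => hcf i
    have hcle : ∀ i, c ≤ cf i := fun i => Finset.inf'_le cf (Finset.mem_univ i)
    have hdten : Tendsto (fun k => x k ⬝ᵥ x k) atTop (nhds 0) := by
      apply squeeze_zero (g := fun k => c⁻¹ * (x k ⬝ᵥ P (v k) *ᵥ x k))
        (fun k => dotProduct_self_nonneg' _) ?_ ?_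
      · intro k
        have h1 := hcb (v k) (x k)
        have h2 : c * (x k ⬝ᵥ x k) ≤ x k ⬝ᵥ P (v k) *ᵥ x k :=
          le_trans (mul_le_mul_of_nonneg_right (hcle (v k)) (dotProduct_self_nonneg' _)) h1
        calc x k ⬝ᵥ x k = c⁻¹ * (c * (x k ⬝ᵥ x k)) := by field_simp
          _ ≤ c⁻¹ * (x k ⬝ᵥ P (v k) *ᵥ x k) :=
              mul_le_mul_of_nonneg_left h2 (inv_nonneg.2 hcpos.le)
      · simpa using hQten.const_mul c⁻¹
    rw [tendsto_pi_nhds]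
    intro i
    simp only [Pi.zero_apply]
    have hle : ∀ k, |x k i| ≤ Real.sqrt (x k ⬝ᵥ x k) := by
      intro k
      rw [← Real.sqrt_sq_eq_abs]
      apply Real.sqrt_le_sqrt
      have : x k i ^ 2 = x k i * x k i := sq (x k i) ▸ by ring
      rw [this]
      exact Finset.single_le_sum (f := fun j => x k j * x k j)
        (fun j _ => mul_self_nonneg _) (Finset.mem_univ i)
    have hsq : Tendsto (fun k => Real.sqrt (x k ⬝ᵥ x k)) atTop (nhds 0) := by
      have h := (Real.continuous_sqrt.tendsto 0).comp hdten
      simpa [Function.comp_def] using h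
    apply tendsto_of_tendsto_of_tendsto_of_le_of_le (g := fun k => -(Real.sqrt (x k ⬝ᵥ x k)))
      (h := fun k => Real.sqrt (x k ⬝ᵥ x k)) (by simpa using hsq.neg) hsq
    · intro k; exact (abs_le.1 (hle k)).1
    · intro k; exact (abs_le.1 (hle k)).2
  · -- part (ii): ℓ2-gain bound
    intro x w z hx0 hdyn hz hWpos hWfin
    set Qk : ℕ → ℝ := fun k => x k ⬝ᵥ P (v k) *ᵥ x k with hQkdef
    have hstep : ∀ k,
        (w k ≠ 0 → Qk (k+1) + γ⁻¹ * (z k ⬝ᵥ z k) < Qk k + γ * (w k ⬝ᵥ w k)) ∧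
        Qk (k+1) + γ⁻¹ * (z k ⬝ᵥ z k) ≤ Qk k + γ * (w k ⬝ᵥ w k) := by
      intro k
      set u := (G (v k))⁻¹ *ᵥ x k with hudef
      have hGu : G (v k) *ᵥ u = x k := G_mulVec_inv (hGunit (v k)) (x k)
      have ha : (At (σ k) * G (v k) + Bt (σ k) * R (v k)) *ᵥ u + Bw (σ k) *ᵥ w k
          = x (k+1) := by
        rw [hudef, cl_vec (At (σ k)) (Bt (σ k)) (R (v k)) (hGunit (v k)) (x k), ← hdyn k]
      have hb : (Ct (σ k) * G (v k) + Dt (σ k) * R (v k)) *ᵥ u + Dw (σ k) *ᵥ w k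
          = z k := by
        rw [hudef, cl_vec (Ct (σ k)) (Dt (σ k)) (R (v k)) (hGunit (v k)) (x k), ← hz k]
      have hmain : Sum.elim u (w k) ≠ 0 →
          Qk (k+1) + γ⁻¹ * (z k ⬝ᵥ z k) < Qk k + γ * (w k ⬝ᵥ w k) := by
        intro hne
        have hk := hkey k u (w k) hne
        rw [ha, hb, hGu] at hk
        exact hk
      refine ⟨fun hw => hmain (elim_ne_zero_right' hw), ?_⟩
      by_cases hne : Sum.elim u (w k) = 0
      · obtain ⟨hu0, hw0⟩ := elim_eq_zero' hne
        have hxk : x k = 0 := by rw [← hGu, hu0, Matrix.mulVec_zero]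
        have hxk1 : x (k+1) = 0 := by
          rw [hdyn k, hxk, hw0, Matrix.mulVec_zero, Matrix.mulVec_zero, add_zero]
        have hzk : z k = 0 := by
          rw [hz k, hxk, hw0, Matrix.mulVec_zero, Matrix.mulVec_zero, add_zero]
        simp [hQkdef, hxk, hxk1, hzk, hw0, Matrix.mulVec_zero]
      · exact (hmain hne).le
    set Sz : ℕ → ℝ := fun K => ∑ k ∈ Finset.range K, z k ⬝ᵥ z k with hSzdef
    set Sw : ℕ → ℝ := fun K => ∑ k ∈ Finset.range K, w k ⬝ᵥ w k with hSwdef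
    have hQ0 : Qk 0 = 0 := by simp [hQkdef, hx0]
    have hA : ∀ K, Qk K + γ⁻¹ * Sz K ≤ γ * Sw K := by
      intro K
      induction K with
      | zero => simp [hSzdef, hSwdef, hQ0]
      | succ K ih =>
        have h1 := (hstep K).2
        simp only [hSzdef, hSwdef, Finset.sum_range_succ] at ih ⊢
        have e1 : γ⁻¹ * ((∑ k ∈ Finset.range K, z k ⬝ᵥ z k) + z K ⬝ᵥ z K)
            = γ⁻¹ * (∑ k ∈ Finset.range K, z k ⬝ᵥ z k) + γ⁻¹ * (z K ⬝ᵥ z K) := by ring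
        have e2 : γ * ((∑ k ∈ Finset.range K, w k ⬝ᵥ w k) + w K ⬝ᵥ w K)
            = γ * (∑ k ∈ Finset.range K, w k ⬝ᵥ w k) + γ * (w K ⬝ᵥ w K) := by ring
        rw [e1, e2]
        linarith
    have hex : ∃ k0, w k0 ≠ 0 := by
      by_contra hc
      push_neg at hc
      have hz0 : ∀ k : ℕ, ENNReal.ofReal (∑ i, (w k i) ^ 2) = 0 := by
        intro k; rw [hc k]; simp
      rw [tsum_congr hz0, tsum_zero] at hWpos
      exact lt_irrefl _ hWpos
    obtain ⟨k0, hk0⟩ := hex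
    set δ : ℝ := (Qk k0 + γ * (w k0 ⬝ᵥ w k0)) - (Qk (k0+1) + γ⁻¹ * (z k0 ⬝ᵥ z k0)) with hδdef
    have hδpos : 0 < δ := sub_pos.2 ((hstep k0).1 hk0)
    have hB : ∀ K, k0 + 1 ≤ K → Qk K + γ⁻¹ * Sz K + δ ≤ γ * Sw K := by
      intro K hK
      induction K, hK using Nat.le_induction with
      | base =>
        have hA0 := hA k0
        simp only [hSzdef, hSwdef, Finset.sum_range_succ] at hA0 ⊢
        have e1 : γ⁻¹ * ((∑ k ∈ Finset.range k0, z k ⬝ᵥ z k) + z k0 ⬝ᵥ z k0)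
            = γ⁻¹ * (∑ k ∈ Finset.range k0, z k ⬝ᵥ z k) + γ⁻¹ * (z k0 ⬝ᵥ z k0) := by ring
        have e2 : γ * ((∑ k ∈ Finset.range k0, w k ⬝ᵥ w k) + w k0 ⬝ᵥ w k0)
            = γ * (∑ k ∈ Finset.range k0, w k ⬝ᵥ w k) + γ * (w k0 ⬝ᵥ w k0) := by ring
        rw [e1, e2]
        rw [hδdef]
        linarith
      | succ K hK ih =>
        have h1 := (hstep K).2
        simp only [hSzdef, hSwdef, Finset.sum_range_succ] at ih ⊢
        have e1 : γ⁻¹ * ((∑ k ∈ Finset.range K, z k ⬝ᵥ z k) + z K ⬝ᵥ z K)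
            = γ⁻¹ * (∑ k ∈ Finset.range K, z k ⬝ᵥ z k) + γ⁻¹ * (z K ⬝ᵥ z K) := by ring
        have e2 : γ * ((∑ k ∈ Finset.range K, w k ⬝ᵥ w k) + w K ⬝ᵥ w K)
            = γ * (∑ k ∈ Finset.range K, w k ⬝ᵥ w k) + γ * (w K ⬝ᵥ w K) := by ring
        rw [e1, e2]
        linarith
    have hswk : ∀ k, (∑ i, (w k i) ^ 2) = w k ⬝ᵥ w k := by
      intro k; simp [dotProduct, pow_two]
    have hszk : ∀ k, (∑ i, (z k i) ^ 2) = z k ⬝ᵥ z k := by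
      intro k; simp [dotProduct, pow_two]
    set Wr : ℝ := (∑' k, ENNReal.ofReal (∑ i, (w k i) ^ 2)).toReal with hWrdef
    have hSwle : ∀ K, Sw K ≤ Wr := by
      intro K
      have h1 : ENNReal.ofReal (Sw K) ≤ ∑' k, ENNReal.ofReal (∑ i, (w k i) ^ 2) := by
        calc ENNReal.ofReal (Sw K)
            = ∑ k ∈ Finset.range K, ENNReal.ofReal (w k ⬝ᵥ w k) :=
              ENNReal.ofReal_sum_of_nonneg (fun k _ => dotProduct_self_nonneg' _)
          _ = ∑ k ∈ Finset.range K, ENNReal.ofReal (∑ i, (w k i) ^ 2) := by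
              simp only [hswk]
          _ ≤ ∑' k, ENNReal.ofReal (∑ i, (w k i) ^ 2) := ENNReal.sum_le_tsum _
      exact (ENNReal.ofReal_le_iff_le_toReal hWfin.ne).1 h1
    have hfin : ∀ K, Sz K ≤ γ ^ 2 * Wr - γ * δ := by
      intro K
      set M := max K (k0 + 1) with hMdef
      have hmono : Sz K ≤ Sz M := by
        apply Finset.sum_le_sum_of_subset_of_nonneg
          (Finset.range_subset_range.2 (le_max_left _ _))
        intro k _ _; exact dotProduct_self_nonneg' _
      have hB' := hB M (le_max_right _ _)
      have hQnn' : (0:ℝ) ≤ Qk M := hQnn _ _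
      have hSw' : γ * Sw M ≤ γ * Wr := mul_le_mul_of_nonneg_left (hSwle M) hγ.le
      have h2 : γ⁻¹ * Sz M ≤ γ * Wr - δ := by linarith
      have h3 := mul_le_mul_of_nonneg_left h2 hγ.le
      have e : γ * (γ⁻¹ * Sz M) = Sz M := by field_simp
      rw [e] at h3
      have e2 : γ * (γ * Wr - δ) = γ ^ 2 * Wr - γ * δ := by ring
      rw [e2] at h3
      linarith
    have hZle : (∑' k, ENNReal.ofReal (∑ i, (z k i) ^ 2))
        ≤ ENNReal.ofReal (γ ^ 2 * Wr - γ * δ) := by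
      rw [ENNReal.tsum_eq_iSup_nat]
      apply iSup_le
      intro K
      calc ∑ k ∈ Finset.range K, ENNReal.ofReal (∑ i, (z k i) ^ 2)
          = ∑ k ∈ Finset.range K, ENNReal.ofReal (z k ⬝ᵥ z k) := by simp only [hszk]
        _ = ENNReal.ofReal (Sz K) :=
            (ENNReal.ofReal_sum_of_nonneg (fun k _ => dotProduct_self_nonneg' _)).symm
        _ ≤ ENNReal.ofReal (γ ^ 2 * Wr - γ * δ) := ENNReal.ofReal_le_ofReal (hfin K)
    have hWrpos : 0 < Wr := ENNReal.toReal_pos hWpos.ne' hWfin.ne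
    have hlt : ENNReal.ofReal (γ ^ 2 * Wr - γ * δ) < ENNReal.ofReal (γ ^ 2 * Wr) := by
      rw [ENNReal.ofReal_lt_ofReal_iff (by positivity)]
      nlinarith
    have heq : ENNReal.ofReal (γ ^ 2 * Wr)
        = ENNReal.ofReal γ ^ 2 * ∑' k, ENNReal.ofReal (∑ i, (w k i) ^ 2) := by
      rw [ENNReal.ofReal_mul (by positivity), ENNReal.ofReal_pow hγ.le,
        hWrdef, ENNReal.ofReal_toReal hWfin.ne]
    exact lt_of_le_of_lt hZle (heq ▸ hlt)
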